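/- arXiv:2510.22040 — 3 statements merged into one kernel-verified Lean document; each statement's English description precedes it below -/
import Mathlib

section
/- Let S = {s_1 < s_2 < ... < s_ℓ} ⊆ [k] and consider all top-k lists τ over [n] whose intersection with [k] equals S. For each j ∈ {1,...,ℓ}, the inversion count I_{s_j}(τ) = |{ t > s_j : t ≻_τ s_j }| can take exactly the values 0, 1, ..., k - j, and the map sending τ (with the set and order of its non-[k] elements fixed) to the vector (I_{s_1}(τ), ..., I_{s_ℓ}(τ)) is a bijection onto ∏_{j=1}^{ℓ} {0, 1, ..., k-j}. -/
open Finset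

/-- `I_i(τ)` for a top-`k` list represented as a duplicate-free list: the number of
elements `t > i` ranked above `i` by `τ` (an element ranked by `τ` counts as above
any element not in `τ`). -/
def InvL {n : ℕ} (τ : List (Fin n)) (i : Fin n) : ℕ :=
  (Finset.univ.filter fun t : Fin n =>
    i < t ∧ t ∈ τ ∧ (i ∉ τ ∨ τ.idxOf t < τ.idxOf i)).card

lemma idx_insert_self {α} [DecidableEq α] (a : α) (l : List α) (p : ℕ)
    (ha : a ∉ l) (hp : p ≤ l.length) : (l.insertIdx p a).idxOf a = p := by
  induction l generalizing p with
  | nil => obtain rfl : p = 0 := Nat.le_zero.mp (by simpa using hp); simp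
  | cons c l ih =>
    simp only [List.mem_cons, not_or] at ha
    cases p with
    | zero => simp
    | succ q =>
      rw [List.insertIdx_succ_cons, List.idxOf_cons_ne _ (Ne.symm ha.1),
        ih q ha.2 (by simpa using hp)]

lemma idx_insert_of_mem {α} [DecidableEq α] (a x : α) (l : List α) (p : ℕ)
    (hx : x ∈ l) (ha : a ∉ l) (hp : p ≤ l.length) :
    (l.insertIdx p a).idxOf x =
      if l.idxOf x < p then l.idxOf x else l.idxOf x + 1 := by
  induction l generalizing p with
  | nil => simp at hx
  | cons c l ih =>
    have hxa : x ≠ a := by rintro rfl; exact ha hx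
    simp only [List.mem_cons, not_or] at ha
    cases p with
    | zero =>
      simp only [List.insertIdx_zero, Nat.not_lt_zero, if_false]
      rw [List.idxOf_cons_ne _ hxa.symm]
    | succ q =>
      rw [List.insertIdx_succ_cons]
      by_cases hxc : x = c
      · subst hxc
        rw [List.idxOf_cons_self, List.idxOf_cons_self]
        simp
      · rw [List.idxOf_cons_ne _ (Ne.symm (Ne.intro hxc)),
          List.idxOf_cons_ne _ (Ne.symm (Ne.intro hxc)),
          ih q (by simpa [hxc] using hx) ha.2 (by simpa using hp)]
        split_ifs <;> omega

lemma filter_insertIdx {α} (q : α → Bool) (a : α) (l : List α) (p : ℕ)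
    (hp : p ≤ l.length) (hqa : q a = false) :
    (l.insertIdx p a).filter q = l.filter q := by
  induction l generalizing p with
  | nil => obtain rfl : p = 0 := Nat.le_zero.mp (by simpa using hp); simp [hqa]
  | cons c l ih =>
    cases p with
    | zero => simp [List.filter_cons, hqa]
    | succ r =>
      rw [List.insertIdx_succ_cons, List.filter_cons, List.filter_cons,
        ih r (by simpa using hp)]

lemma insertIdx_indexOf_erase {α} [DecidableEq α] (s : α) (τ : List α)
    (hs : s ∈ τ) : (τ.erase s).insertIdx (τ.idxOf s) s = τ := by
  induction τ with
  | nil => simp at hs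
  | cons c t ih =>
    by_cases hcs : c = s
    · subst hcs; simp
    · rw [List.erase_cons_tail (by simpa using hcs),
        List.idxOf_cons_ne _ (Ne.intro hcs)]
      rw [Nat.succ_eq_add_one, List.insertIdx_succ_cons,
        ih (by simp [Ne.symm (Ne.intro hcs)] at hs; exact hs)]
lemma invL_eq_indexOf {n} (τ : List (Fin n)) (s : Fin n) (hnd : τ.Nodup)
    (hs : s ∈ τ) (hmin : ∀ t ∈ τ, t ≠ s → s < t) : InvL τ s = τ.idxOf s := by
  set p := τ.idxOf s with hpdef
  have hp : p < τ.length := List.idxOf_lt_length_iff.mpr hs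
  have hset : (univ.filter fun t : Fin n =>
      s < t ∧ t ∈ τ ∧ (s ∉ τ ∨ τ.idxOf t < τ.idxOf s)) = (τ.take p).toFinset := by
    ext t
    simp only [mem_filter, mem_univ, true_and, List.mem_toFinset]
    constructor
    · rintro ⟨hst, htτ, h⟩
      have hlt : τ.idxOf t < p := by
        rcases h with h | h
        · exact absurd hs h
        · exact h
      have h1 : τ.idxOf t < τ.length := List.idxOf_lt_length_iff.mpr htτ
      have heq : (τ.take p)[τ.idxOf t]'(by simp; omega) = t := by
        rw [List.getElem_take]; exact List.getElem_idxOf h1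
      exact heq ▸ List.getElem_mem _
    · intro ht
      obtain ⟨i, hi, hti⟩ := List.getElem_of_mem ht
      have hi' : i < τ.length := by simp at hi; omega
      have hip : i < p := by simp at hi; omega
      have htτ : t ∈ τ := by
        have : τ[i] = t := by rw [← hti, List.getElem_take]
        exact this ▸ List.getElem_mem _
      have hidx : τ.idxOf t = i := by
        have : τ[i] = t := by rw [← hti, List.getElem_take]
        rw [← this]; exact List.Nodup.idxOf_getElem hnd i hi'
      have hts : t ≠ s := by
        intro h; rw [h, ← hpdef] at hidx; omega
      exact ⟨hmin t htτ hts, htτ, Or.inr (by omega)⟩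
  rw [InvL, hset, List.toFinset_card_of_nodup (hnd.sublist (List.take_sublist _ _)),
    List.length_take]
  omega

lemma invL_insert_lt {n} (l : List (Fin n)) (a b : Fin n) (p : ℕ) (hnd : l.Nodup)
    (ha : a ∉ l) (hp : p ≤ l.length) (hab : a < b) :
    InvL (l.insertIdx p a) b = InvL l b := by
  have hperm := List.perm_insertIdx a l hp
  have hmem : ∀ t : Fin n, t ∈ l.insertIdx p a ↔ t = a ∨ t ∈ l := fun t => by
    rw [hperm.mem_iff]; simp
  have hba : b ∈ l.insertIdx p a ↔ b ∈ l := by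
    rw [hmem]; simp [hab.ne']
  unfold InvL
  congr 1
  apply Finset.filter_congr
  intro t _
  constructor
  · rintro ⟨hbt, htm, h⟩
    have hta : t ≠ a := by rintro rfl; exact absurd hbt (lt_asymm hab)
    have htl : t ∈ l := by rcases (hmem t).1 htm with h' | h'; exact absurd h' hta; exact h'
    refine ⟨hbt, htl, ?_⟩
    by_cases hbl : b ∈ l
    · right
      rcases h with h | h
      · exact absurd (hba.mpr hbl) h
      · rw [idx_insert_of_mem a t l p htl ha hp, idx_insert_of_mem a b l p hbl ha hp] at h
        split_ifs at h <;> omega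
    · exact Or.inl hbl
  · rintro ⟨hbt, htl, h⟩
    have hta : t ≠ a := fun h' => absurd (h' ▸ hbt) (lt_asymm hab)
    refine ⟨hbt, (hmem t).2 (Or.inr htl), ?_⟩
    by_cases hbl : b ∈ l
    · right
      rcases h with h | h
      · exact absurd hbl h
      · rw [idx_insert_of_mem a t l p htl ha hp, idx_insert_of_mem a b l p hbl ha hp]
        split_ifs <;> omega
    · exact Or.inl (fun hb => hbl (hba.mp hb))

lemma domain_length {n} (sl rest : List (Fin n)) (hsl : sl.Pairwise (· < ·))
    (hrest : rest.Nodup) (hlt : ∀ s ∈ sl, ∀ x ∈ rest, s < x) (τ : List (Fin n))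
    (hnd : τ.Nodup) (hm : ∀ x, x ∈ τ ↔ x ∈ sl ∨ x ∈ rest) :
    τ.length = sl.length + rest.length := by
  have hnd2 : (sl ++ rest).Nodup := by
    rw [List.nodup_append]
    exact ⟨hsl.nodup, hrest, fun a ha b hb h => (hlt a ha b hb).ne h⟩
  have hperm := (List.perm_ext_iff_of_nodup hnd hnd2).mpr
    (fun a => by rw [hm a, List.mem_append])
  simpa using hperm.length_eq

lemma master {n : ℕ} (sl rest : List (Fin n)) (hsl : sl.Pairwise (· < ·))
    (hrest : rest.Nodup) (hlt : ∀ s ∈ sl, ∀ x ∈ rest, s < x) :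
    Set.BijOn (fun τ : List (Fin n) => fun j : Fin sl.length => InvL τ sl[j])
      {τ | τ.Nodup ∧ (∀ x : Fin n, (x ∈ τ ↔ x ∈ sl ∨ x ∈ rest)) ∧
        τ.filter (fun x => decide (x ∈ rest)) = rest}
      {v | ∀ j : Fin sl.length, v j < sl.length - (j : ℕ) + rest.length} := by
  induction sl with
  | nil =>
    have hdom : {τ : List (Fin n) | τ.Nodup ∧ (∀ x : Fin n, (x ∈ τ ↔ x ∈ ([] : List (Fin n)) ∨ x ∈ rest)) ∧
        τ.filter (fun x => decide (x ∈ rest)) = rest} = {rest} := by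
      ext τ
      simp only [Set.mem_setOf_eq, Set.mem_singleton_iff]
      constructor
      · rintro ⟨h1, h2, h3⟩
        have heq : τ.filter (fun x => decide (x ∈ rest)) = τ :=
          List.filter_eq_self.mpr (fun a ha => by
            simp only [decide_eq_true_eq]
            simpa using (h2 a).1 ha)
        rw [← h3, heq]
      · rintro rfl
        exact ⟨hrest, by simp, List.filter_eq_self.mpr (fun a ha => by simpa)⟩
    rw [hdom]
    refine ⟨fun τ _ j => j.elim0, fun τ1 h1 τ2 h2 _ => h1.trans h2.symm, fun v _ => ?_⟩
    exact ⟨rest, rfl, funext fun j => j.elim0⟩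
  | cons s sl' ih =>
    obtain ⟨hs_lt, hsl'⟩ := List.pairwise_cons.mp hsl
    have hlt' : ∀ t ∈ sl', ∀ x ∈ rest, t < x := fun t ht x hx =>
      hlt t (List.mem_cons_of_mem s ht) x hx
    have hIH := ih hsl' hlt'
    have hs_big : ∀ t : Fin n, (t ∈ sl' ∨ t ∈ rest) → s < t := by
      rintro t (ht | ht)
      · exact hs_lt t ht
      · exact hlt s (List.mem_cons_self (a := s) (l := sl')) t ht
    have hs_nin_sl' : s ∉ sl' := fun h => lt_irrefl s (hs_big s (Or.inl h))
    have hs_nin_rest : s ∉ rest := fun h => lt_irrefl s (hs_big s (Or.inr h))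
    -- facts about a member τ of the domain
    have key : ∀ τ : List (Fin n), τ.Nodup →
        (∀ x : Fin n, (x ∈ τ ↔ x ∈ s :: sl' ∨ x ∈ rest)) →
        τ.filter (fun x => decide (x ∈ rest)) = rest →
        (τ.erase s).Nodup ∧
        (∀ x : Fin n, (x ∈ τ.erase s ↔ x ∈ sl' ∨ x ∈ rest)) ∧
        (τ.erase s).filter (fun x => decide (x ∈ rest)) = rest ∧
        s ∈ τ ∧ τ.idxOf s ≤ (τ.erase s).length ∧
        (τ.erase s).insertIdx (τ.idxOf s) s = τ ∧
        InvL τ s = τ.idxOf s ∧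
        τ.length = sl'.length + 1 + rest.length ∧
        s ∉ τ.erase s := by
      intro τ d1 d2 d3
      have hsτ : s ∈ τ := (d2 s).2 (Or.inl (List.mem_cons_self (a := s) (l := sl')))
      have he_nodup : (τ.erase s).Nodup := d1.erase s
      have he_mem : ∀ x : Fin n, (x ∈ τ.erase s ↔ x ∈ sl' ∨ x ∈ rest) := by
        intro x
        rw [d1.mem_erase_iff]
        constructor
        · rintro ⟨hxs, hxτ⟩
          rcases (d2 x).1 hxτ with h | h
          · rcases List.mem_cons.mp h with h | h
            · exact absurd h hxs
            · exact Or.inl h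
          · exact Or.inr h
        · intro h
          exact ⟨fun he => lt_irrefl s (he ▸ hs_big x h), (d2 x).2 (by rcases h with h|h; exact Or.inl (List.mem_cons_of_mem s h); exact Or.inr h)⟩
      have hs_nin_e : s ∉ τ.erase s := fun h => (d1.mem_erase_iff.mp h).1 rfl
      have he_filter : (τ.erase s).filter (fun x => decide (x ∈ rest)) = rest := by
        rw [d1.erase_eq_filter s, List.filter_filter]
        rw [← d3]
        apply List.filter_congr
        intro x hx
        by_cases hxr : x ∈ rest
        · have hxs : x ≠ s := fun h => hs_nin_rest (h ▸ hxr)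
          simp [hxr, hxs, hx]
        · simp [hxr]
      have hp_lt : τ.idxOf s < τ.length := List.idxOf_lt_length_iff.mpr hsτ
      have he_len : (τ.erase s).length = τ.length - 1 := List.length_erase_of_mem hsτ
      have hmin : ∀ t ∈ τ, t ≠ s → s < t := by
        intro t ht hts
        rcases (d2 t).1 ht with h | h
        · rcases List.mem_cons.mp h with h | h
          · exact absurd h hts
          · exact hs_big t (Or.inl h)
        · exact hs_big t (Or.inr h)
      have hlen : τ.length = sl'.length + 1 + rest.length := by
        have := domain_length (s :: sl') rest hsl hrest hlt τ d1 d2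
        simpa [Nat.add_comm, Nat.add_assoc, Nat.add_left_comm] using this
      exact ⟨he_nodup, he_mem, he_filter, hsτ, by omega,
        insertIdx_indexOf_erase s τ hsτ, invL_eq_indexOf τ s d1 hsτ hmin, hlen, hs_nin_e⟩
    -- InvL of τ at sl' elements equals InvL of erase
    have key2 : ∀ τ : List (Fin n), τ.Nodup →
        (∀ x : Fin n, (x ∈ τ ↔ x ∈ s :: sl' ∨ x ∈ rest)) →
        τ.filter (fun x => decide (x ∈ rest)) = rest →
        ∀ (j : ℕ) (hj : j < sl'.length), InvL τ sl'[j] = InvL (τ.erase s) sl'[j] := by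
      intro τ d1 d2 d3 j hj
      obtain ⟨he_nodup, he_mem, _, hsτ, hple, hins, _, _, hs_nin_e⟩ := key τ d1 d2 d3
      conv_lhs => rw [← hins]
      exact invL_insert_lt (τ.erase s) s sl'[j] (τ.idxOf s) he_nodup hs_nin_e hple
        (hs_big sl'[j] (Or.inl (List.getElem_mem hj)))
    refine ⟨?_, ?_, ?_⟩
    · -- MapsTo
      rintro τ ⟨d1, d2, d3⟩ 
      obtain ⟨he_nodup, he_mem, he_filter, hsτ, hple, hins, hinv0, hlen, _⟩ := key τ d1 d2 d3
      intro j
      rcases j with ⟨j, hj⟩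
      cases j with
      | zero =>
        have e0 : (s :: sl')[(⟨0, hj⟩ : Fin (s :: sl').length)] = s := rfl
        have : τ.idxOf s < τ.length := List.idxOf_lt_length_iff.mpr hsτ
        beta_reduce
        rw [e0, hinv0]
        have ev : ((⟨0, hj⟩ : Fin (s :: sl').length) : ℕ) = 0 := rfl
        rw [ev, List.length_cons]
        omega
      | succ j' =>
        have hj' : j' < sl'.length := by simpa using hj
        have e1 : (s :: sl')[(⟨j' + 1, hj⟩ : Fin (s :: sl').length)] = sl'[j'] := rfl
        have h2 := hIH.mapsTo ⟨he_nodup, he_mem, he_filter⟩ ⟨j', hj'⟩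
        simp only [Set.mem_setOf_eq] at h2
        beta_reduce
        rw [e1, key2 τ d1 d2 d3 j' hj']
        have ev : ((⟨j' + 1, hj⟩ : Fin (s :: sl').length) : ℕ) = j' + 1 := rfl
        have ev2 : ((⟨j', hj'⟩ : Fin sl'.length) : ℕ) = j' := rfl
        rw [ev, List.length_cons]
        simp only [Fin.getElem_fin, ev2] at h2
        omega
    · -- InjOn
      rintro τ1 ⟨d1, d2, d3⟩ τ2 ⟨e1, e2, e3⟩ heq
      obtain ⟨f1, f2, f3, hsτ1, hple1, hins1, hinv1, _, _⟩ := key τ1 d1 d2 d3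
      obtain ⟨g1, g2, g3, hsτ2, hple2, hins2, hinv2, _, _⟩ := key τ2 e1 e2 e3
      have h0 : τ1.idxOf s = τ2.idxOf s := by
        have hcf := congrFun heq ⟨0, Nat.succ_pos _⟩
        have e0 : (s :: sl')[(⟨0, Nat.succ_pos _⟩ : Fin (s :: sl').length)] = s := rfl
        simp only [e0] at hcf
        rw [← hinv1, ← hinv2]
        exact hcf
      have herase : τ1.erase s = τ2.erase s := by
        apply hIH.injOn ⟨f1, f2, f3⟩ ⟨g1, g2, g3⟩
        funext ⟨j, hj⟩
        have hcf := congrFun heq ⟨j + 1, by simpa using hj⟩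
        have ee : (s :: sl')[(⟨j + 1, by simpa using hj⟩ : Fin (s :: sl').length)] = sl'[j] := rfl
        simp only [ee] at hcf
        simp only [Fin.getElem_fin]
        rw [← key2 τ1 d1 d2 d3 j hj, ← key2 τ2 e1 e2 e3 j hj]
        exact hcf
      rw [← hins1, ← hins2, h0, herase]
    · -- SurjOn
      rintro v hv
      simp only [Set.mem_setOf_eq] at hv
      have hv' : (fun j : Fin sl'.length => v ⟨(j : ℕ) + 1, by simpa using j.isLt⟩) ∈
          {w | ∀ j : Fin sl'.length, w j < sl'.length - (j : ℕ) + rest.length} := by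
        intro j
        have := hv ⟨(j : ℕ) + 1, by simpa using j.isLt⟩
        simp only [List.length_cons] at this
        have hjl := j.isLt
        simp only
        omega
      obtain ⟨τ', hτ'D, hτ'f⟩ := hIH.surjOn hv'
      obtain ⟨f1, f2, f3⟩ := hτ'D
      have hlen' : τ'.length = sl'.length + rest.length :=
        domain_length sl' rest hsl' hrest hlt' τ' f1 f2
      have hv0 : v ⟨0, Nat.succ_pos _⟩ ≤ τ'.length := by
        have := hv ⟨0, Nat.succ_pos _⟩
        simp only [List.length_cons] at this
        omega
      set p := v ⟨0, Nat.succ_pos _⟩ with hpdef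
      set τ := τ'.insertIdx p s with hτdef
      have hs_nin : s ∉ τ' := fun h => lt_irrefl s (hs_big s ((f2 s).1 h))
      have hperm : τ.Perm (s :: τ') := List.perm_insertIdx s τ' hv0
      have hnodup : τ.Nodup := hperm.nodup_iff.mpr (List.nodup_cons.mpr ⟨hs_nin, f1⟩)
      have hmemτ : ∀ x : Fin n, (x ∈ τ ↔ x ∈ s :: sl' ∨ x ∈ rest) := by
        intro x
        rw [hperm.mem_iff, List.mem_cons, f2 x, List.mem_cons]
        tauto
      have hfil : τ.filter (fun x => decide (x ∈ rest)) = rest := by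
        rw [hτdef, filter_insertIdx _ s τ' p hv0 (by simpa using hs_nin_rest), f3]
      refine ⟨τ, ⟨hnodup, hmemτ, hfil⟩, ?_⟩
      have hidx : τ.idxOf s = p := idx_insert_self s τ' p hs_nin hv0
      funext ⟨j, hj⟩
      cases j with
      | zero =>
        have e0 : (s :: sl')[(⟨0, hj⟩ : Fin (s :: sl').length)] = s := rfl
        beta_reduce
        rw [e0]
        have hmin : ∀ t ∈ τ, t ≠ s → s < t := by
          intro t ht hts
          rcases (hmemτ t).1 ht with h | h
          · rcases List.mem_cons.mp h with h | h
            · exact absurd h hts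
            · exact hs_big t (Or.inl h)
          · exact hs_big t (Or.inr h)
        have hsτ : s ∈ τ := (hmemτ s).2 (Or.inl (List.mem_cons_self (a := s) (l := sl')))
        rw [invL_eq_indexOf τ s hnodup hsτ hmin, hidx]
      | succ j' =>
        have hj' : j' < sl'.length := by simpa using hj
        have ee : (s :: sl')[(⟨j' + 1, hj⟩ : Fin (s :: sl').length)] = sl'[j'] := rfl
        beta_reduce
        rw [ee, hτdef, invL_insert_lt τ' s sl'[j'] p f1 hs_nin hv0
          (hs_big sl'[j'] (Or.inl (List.getElem_mem hj')))]
        have hcf := congrFun hτ'f ⟨j', hj'⟩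
        simpa using hcf

/-- Fix `S = {s_1 < ⋯ < s_ℓ} ⊆ [k]` and a fixed ordered sequence `rest` of `k - ℓ`
elements of `[n] \ [k]`.  Over the top-`k` lists `τ` with `τ ∩ [k] = S` whose
subsequence of non-`[k]` elements is exactly `rest`, the map
`τ ↦ (I_{s_1}(τ), …, I_{s_ℓ}(τ))` is a bijection onto `∏_{j=1}^{ℓ} {0,1,…,k-j}`. -/
theorem stmt3 (n k ℓ : ℕ) (hk : k ≤ n) (S : Finset (Fin n))
    (hS : ∀ i ∈ S, (i : ℕ) < k) (hcard : S.card = ℓ)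
    (rest : List (Fin n)) (hnd : rest.Nodup) (hlen : rest.length = k - ℓ)
    (hmem : ∀ x ∈ rest, k ≤ (x : ℕ)) :
    Set.BijOn
      (fun τ : List (Fin n) => fun j : Fin ℓ =>
        InvL τ ((S.orderIsoOfFin hcard j : S) : Fin n))
      {τ | τ.Nodup ∧ τ.length = k ∧
        (∀ i : Fin n, (i : ℕ) < k → (i ∈ τ ↔ i ∈ S)) ∧
        τ.filter (fun x => decide (k ≤ (x : ℕ))) = rest}
      {v | ∀ j : Fin ℓ, v j < k - (j : ℕ)} := by
  have hslen : (S.sort (· ≤ ·)).length = ℓ := by rw [Finset.length_sort, hcard]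
  subst hslen
  set sl := S.sort (· ≤ ·) with hsl_def
  have hsl_sorted : sl.Pairwise (· < ·) := S.sortedLT_sort.pairwise
  have hmem_sl : ∀ x : Fin n, x ∈ sl ↔ x ∈ S := fun x => Finset.mem_sort _
  have hℓk : sl.length ≤ k := by
    rw [← hcard]
    have hsub : S.image Fin.val ⊆ Finset.range k := by
      intro x hx
      obtain ⟨y, hy, rfl⟩ := Finset.mem_image.mp hx
      exact Finset.mem_range.mpr (hS y hy)
    calc S.card = (S.image Fin.val).card := (Finset.card_image_of_injective S Fin.val_injective).symm
    _ ≤ (Finset.range k).card := Finset.card_le_card hsub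
    _ = k := Finset.card_range k
  have hlt : ∀ s ∈ sl, ∀ x ∈ rest, s < x := by
    intro s hs x hx
    have h1 : (s : ℕ) < k := hS s ((hmem_sl s).mp hs)
    have h2 : k ≤ (x : ℕ) := hmem x hx
    exact Fin.lt_def.mpr (by omega)
  have hsnr : ∀ x : Fin n, x ∈ sl → x ∉ rest := fun x hx hr => lt_irrefl x (hlt x hx x hr)
  have hbind : ∀ l : List (Fin n), (l >>= fun a => (pure (a : ℕ) : List ℕ)) = l.map Fin.val := by
    intro l
    show List.flatMap (fun a : Fin n => [(a : ℕ)]) l = l.map Fin.val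
    induction l with
    | nil => rfl
    | cons c l ih => rw [List.flatMap_cons, ih]; rfl
  have hcond : ∀ τ : List (Fin n),
      (List.filter (fun x => decide (k ≤ x)) (τ >>= fun a => (pure (a : ℕ) : List ℕ)) =
        (rest >>= fun a => (pure (a : ℕ) : List ℕ))) ↔
      τ.filter (fun x : Fin n => decide (k ≤ (x : ℕ))) = rest := by
    intro τ
    rw [hbind, hbind, List.filter_map]
    constructor
    · intro h
      exact List.map_injective_iff.mpr Fin.val_injective h
    · intro h
      rw [← h]
      rfl
  have hdom : {τ : List (Fin n) | τ.Nodup ∧ τ.length = k ∧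
        (∀ i : Fin n, (i : ℕ) < k → (i ∈ τ ↔ i ∈ S)) ∧
        τ.filter (fun x => decide (k ≤ (x : ℕ))) = rest} =
      {τ : List (Fin n) | τ.Nodup ∧ (∀ x : Fin n, (x ∈ τ ↔ x ∈ sl ∨ x ∈ rest)) ∧
        τ.filter (fun x => decide (x ∈ rest)) = rest} := by
    ext τ
    simp only [Set.mem_setOf_eq]
    constructor
    · rintro ⟨h1, h2, h3, h4'⟩
      replace h4 := (hcond τ).mp h4'
      have hbig : ∀ x : Fin n, x ∈ τ → k ≤ (x : ℕ) → x ∈ rest := by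
        intro x hx hkx
        rw [← h4]
        exact List.mem_filter.mpr ⟨hx, by simpa using hkx⟩
      refine ⟨h1, ?_, ?_⟩
      · intro x
        by_cases hx : (x : ℕ) < k
        · rw [h3 x hx, ← hmem_sl x]
          constructor
          · exact Or.inl
          · rintro (h | h)
            · exact h
            · exact absurd (hmem x h) (by omega)
        · push_neg at hx
          constructor
          · intro h; exact Or.inr (hbig x h hx)
          · rintro (h | h)
            · exact absurd (hS x ((hmem_sl x).mp h)) (by omega)
            · rw [← h4] at h; exact List.mem_of_mem_filter h
      · conv_rhs => rw [← h4]
        apply List.filter_congr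
        intro x hx
        simp only [decide_eq_decide]
        exact ⟨fun h => hmem x h, fun h => hbig x hx h⟩
    · rintro ⟨h1, h2, h3⟩
      have hlength : τ.length = k := by
        have := domain_length sl rest hsl_sorted hnd hlt τ h1 h2
        omega
      refine ⟨h1, hlength, ?_, (hcond τ).mpr ?_⟩
      · intro i hi
        rw [h2 i, ← hmem_sl i]
        constructor
        · rintro (h | h)
          · exact h
          · exact absurd (hmem i h) (by omega)
        · exact Or.inl
      · rw [← h3]
        apply List.filter_congr
        intro x hx
        simp only [decide_eq_decide]
        constructor
        · intro h
          rcases (h2 x).mp hx with h' | h'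
          · exact absurd (hS x ((hmem_sl x).mp h')) (by omega)
          · exact h'
        · exact fun h => hmem x h
  have htgt : {v : Fin sl.length → ℕ | ∀ j : Fin sl.length, v j < k - (j : ℕ)} =
      {v : Fin sl.length → ℕ | ∀ j : Fin sl.length, v j < sl.length - (j : ℕ) + rest.length} := by
    ext v
    simp only [Set.mem_setOf_eq]
    refine forall_congr' fun j => ?_
    have := j.isLt
    constructor <;> intro h <;> omega
  rw [hdom, htgt]
  refine (master sl rest hsl_sorted hnd hlt).congr ?_
  intro τ _
  funext j
  have he : ((S.orderIsoOfFin hcard j : S) : Fin n) = sl[(j : ℕ)] := by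
    rw [Finset.coe_orderIsoOfFin_apply, Finset.orderEmbOfFin_apply]
    rfl
  simp only [he]
  rfl
end

section
/- Under the generalized top-k Mallows model, the probability of the profile S = τ ∩ τ* is proportional to exp(-β f(S)) · Z(S), where f(S) = w_0 p Q(S) + Σ_{j ∈ [k]\S} w_j (I_j(S) + p P_j(S)) and Z(S) = (n-k choose k-ℓ)(k-ℓ)! ∏_{j=1}^{ℓ} Σ_{r=0}^{k-j} e^{-β w_{s_j} r}. That is, Σ_{τ : τ∩[k]=S} exp(-β K^{p,w}(τ, τ*)) = exp(-β f(S)) Z(S). -/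
open Finset

/-- `i` is ranked by the top-`k` list `τ` (an injection `Fin k ↪ Fin n`). -/
def ranked {n k : ℕ} (τ : Fin k ↪ Fin n) (i : Fin n) : Prop := ∃ a, τ a = i

instance {n k : ℕ} (τ : Fin k ↪ Fin n) (i : Fin n) : Decidable (ranked τ i) :=
  inferInstanceAs (Decidable (∃ a, τ a = i))

/-- `i ≻_τ j`: `i` is ranked by `τ` and either `j` is unranked or `i` precedes `j`. -/
def above {n k : ℕ} (τ : Fin k ↪ Fin n) (i j : Fin n) : Prop :=
  ranked τ i ∧ ∀ b, τ b = j → ∃ a, a < b ∧ τ a = i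

instance {n k : ℕ} (τ : Fin k ↪ Fin n) (i j : Fin n) : Decidable (above τ i j) := by
  unfold above; infer_instance

/-- The inversion count `I_i(τ) = |{t > i : t ≻_τ i}|`. -/
def InvI {n k : ℕ} (τ : Fin k ↪ Fin n) (i : Fin n) : ℕ :=
  (Finset.univ.filter fun t : Fin n => i < t ∧ above τ t i).card

/-- `P_i(τ) = |{t > i : t and i both unranked by τ}|`. -/
def Pinv {n k : ℕ} (τ : Fin k ↪ Fin n) (i : Fin n) : ℕ :=
  (Finset.univ.filter fun t : Fin n => i < t ∧ ¬ ranked τ t ∧ ¬ ranked τ i).card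

/-- The center `τ* = (1,…,k)` as a finset: elements of value `< k`. -/
def centerF (n k : ℕ) : Finset (Fin n) := Finset.univ.filter fun i => (i : ℕ) < k

/-- The profile `τ ∩ τ*` of a top-`k` list. -/
def profileF {n k : ℕ} (τ : Fin k ↪ Fin n) : Finset (Fin n) :=
  Finset.univ.filter fun i => (i : ℕ) < k ∧ ranked τ i

/-- `Q(τ) = (k - |τ ∩ τ*| choose 2)`. -/
def Qinv {n k : ℕ} (τ : Fin k ↪ Fin n) : ℕ := (k - (profileF τ).card).choose 2

/-- The generalized top-`k` Mallows distance
`K^{p,w}(τ,τ*) = w₀ p Q(τ) + Σ_{i ∈ [k]} w_i (I_i(τ) + p P_i(τ))`. -/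
noncomputable def Kdist {n k : ℕ} (p w0 : ℝ) (w : Fin n → ℝ) (τ : Fin k ↪ Fin n) : ℝ :=
  w0 * p * (Qinv τ : ℕ) +
    ∑ i ∈ centerF n k, w i * ((InvI τ i : ℝ) + p * (Pinv τ i : ℝ))

/-- `f(S) = w₀ p Q(S) + Σ_{j ∈ [k]\S} w_j (I_j(S) + p P_j(S))`, depending only on the profile. -/
noncomputable def fS (n k : ℕ) (p w0 : ℝ) (w : Fin n → ℝ) (S : Finset (Fin n)) : ℝ :=
  w0 * p * ((k - S.card).choose 2 : ℕ) +
    ∑ j ∈ centerF n k \ S,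
      w j * ((((S.filter fun t => j < t).card + (k - S.card) : ℕ) : ℝ)
        + p * ((((centerF n k \ S).filter fun t => j < t).card + (n - k - (k - S.card)) : ℕ) : ℝ))

/-- `Z(S) = (n-k choose k-ℓ) (k-ℓ)! ∏_{j=1}^{ℓ} Σ_{r=0}^{k-j} e^{-β w_{s_j} r}`,
where `s_1 < s_2 < ⋯ < s_ℓ` are the elements of `S`. -/
noncomputable def ZS (n k : ℕ) (β : ℝ) (w : Fin n → ℝ) (S : Finset (Fin n)) : ℝ :=
  (((n - k).choose (k - S.card) * (k - S.card).factorial : ℕ) : ℝ) *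
    ∏ j : Fin S.card, ∑ r ∈ Finset.range (k - (j : ℕ)),
      Real.exp (-β * w ((S.orderIsoOfFin rfl j : S) : Fin n) * r)

section Aux

open Finset

variable {n m k : ℕ}

/-- Profile of a general-length top list w.r.t. threshold `k`. -/
def prof (k : ℕ) {n m : ℕ} (τ : Fin m ↪ Fin n) : Finset (Fin n) :=
  Finset.univ.filter fun i => (i : ℕ) < k ∧ ranked τ i

lemma mem_prof {τ : Fin m ↪ Fin n} {i : Fin n} :
    i ∈ prof k τ ↔ (i : ℕ) < k ∧ ranked τ i := by simp [prof]

lemma prof_eq_profileF (τ : Fin k ↪ Fin n) : prof k τ = profileF τ := rfl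

/-- Delete the entry at position `a₀`. -/
def delEmb (a₀ : Fin (m + 1)) (τ : Fin (m + 1) ↪ Fin n) : Fin m ↪ Fin n :=
  (Fin.succAboveEmb a₀).trans τ

lemma delEmb_apply (a₀ : Fin (m + 1)) (τ : Fin (m + 1) ↪ Fin n) (a : Fin m) :
    delEmb a₀ τ a = τ (a₀.succAbove a) := rfl

/-- Insert value `s₁` at position `a₀`. -/
def insEmb (a₀ : Fin (m + 1)) (s₁ : Fin n) (τ : Fin m ↪ Fin n)
    (hs : ∀ a, τ a ≠ s₁) : Fin (m + 1) ↪ Fin n :=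
  ⟨a₀.insertNth s₁ τ, by
    have key : ∀ z : Fin (m + 1), z ≠ a₀ →
        Fin.insertNth (α := fun _ => Fin n) a₀ s₁ (⇑τ) z ≠ s₁ := by
      intro z hz
      obtain ⟨z', rfl⟩ := Fin.exists_succAbove_eq hz
      rw [Fin.insertNth_apply_succAbove]
      exact hs z'
    intro x y hxy
    by_cases hx : x = a₀ <;> by_cases hy : y = a₀
    · rw [hx, hy]
    · subst hx
      rw [Fin.insertNth_apply_same] at hxy
      exact absurd hxy.symm (key y hy)
    · subst hy
      rw [Fin.insertNth_apply_same] at hxy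
      exact absurd hxy (key x hx)
    · obtain ⟨x', rfl⟩ := Fin.exists_succAbove_eq hx
      obtain ⟨y', rfl⟩ := Fin.exists_succAbove_eq hy
      rw [Fin.insertNth_apply_succAbove, Fin.insertNth_apply_succAbove] at hxy
      exact congrArg a₀.succAbove (τ.injective hxy)⟩

lemma insEmb_apply_same (a₀ : Fin (m + 1)) (s₁ : Fin n) (τ : Fin m ↪ Fin n)
    (hs : ∀ a, τ a ≠ s₁) : insEmb a₀ s₁ τ hs a₀ = s₁ := by
  simp only [insEmb, Function.Embedding.coeFn_mk, Fin.insertNth_apply_same]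
  exact Fin.insertNth_apply_same (α := fun _ => Fin n) a₀ s₁ τ

lemma insEmb_apply_succAbove (a₀ : Fin (m + 1)) (s₁ : Fin n) (τ : Fin m ↪ Fin n)
    (hs : ∀ a, τ a ≠ s₁) (a : Fin m) : insEmb a₀ s₁ τ hs (a₀.succAbove a) = τ a := by
  simp only [insEmb, Function.Embedding.coeFn_mk, Fin.insertNth_apply_succAbove]
  exact Fin.insertNth_apply_succAbove (α := fun _ => Fin n) a₀ s₁ τ a

lemma ranked_insEmb (a₀ : Fin (m + 1)) (s₁ : Fin n) (τ : Fin m ↪ Fin n)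
    (hs : ∀ a, τ a ≠ s₁) (i : Fin n) :
    ranked (insEmb a₀ s₁ τ hs) i ↔ i = s₁ ∨ ranked τ i := by
  constructor
  · rintro ⟨a, rfl⟩
    rcases eq_or_ne a a₀ with h | ha
    · left; rw [h]; exact insEmb_apply_same a₀ s₁ τ hs
    · obtain ⟨a', rfl⟩ := Fin.exists_succAbove_eq ha
      right; exact ⟨a', (insEmb_apply_succAbove a₀ s₁ τ hs a').symm⟩
  · rintro (h | ⟨a, rfl⟩)
    · exact ⟨a₀, by rw [insEmb_apply_same a₀ s₁ τ hs, h]⟩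
    · exact ⟨a₀.succAbove a, insEmb_apply_succAbove a₀ s₁ τ hs a⟩

lemma ranked_delEmb (a₀ : Fin (m + 1)) (τ : Fin (m + 1) ↪ Fin n) (i : Fin n)
    (hi : i ≠ τ a₀) : ranked (delEmb a₀ τ) i ↔ ranked τ i := by
  constructor
  · rintro ⟨a, rfl⟩; exact ⟨a₀.succAbove a, rfl⟩
  · rintro ⟨a, rfl⟩
    have ha : a ≠ a₀ := fun h => hi (by rw [h])
    obtain ⟨a', rfl⟩ := Fin.exists_succAbove_eq ha
    exact ⟨a', rfl⟩

lemma prof_insEmb (a₀ : Fin (m + 1)) (s₁ : Fin n) (τ : Fin m ↪ Fin n)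
    (hs : ∀ a, τ a ≠ s₁) (hk1 : (s₁ : ℕ) < k) :
    prof k (insEmb a₀ s₁ τ hs) = insert s₁ (prof k τ) := by
  ext i
  simp only [mem_prof, ranked_insEmb, Finset.mem_insert]
  by_cases h : i = s₁ <;> simp [h, hk1]

lemma prof_delEmb (a₀ : Fin (m + 1)) (τ : Fin (m + 1) ↪ Fin n) :
    prof k (delEmb a₀ τ) = (prof k τ).erase (τ a₀) := by
  ext i
  simp only [mem_prof, Finset.mem_erase]
  constructor
  · rintro ⟨hik, hr⟩
    have hne : i ≠ τ a₀ := by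
      rintro rfl
      obtain ⟨a', ha'⟩ := hr
      exact Fin.succAbove_ne a₀ a' (τ.injective ha')
    exact ⟨hne, hik, (ranked_delEmb a₀ τ i hne).1 hr⟩
  · rintro ⟨hne, hik, hr⟩
    exact ⟨hik, (ranked_delEmb a₀ τ i hne).2 hr⟩

lemma InvI_eq_pos (τ : Fin (m + 1) ↪ Fin n) (a₀ : Fin (m + 1))
    (hlt : ∀ t, ranked τ t → t ≠ τ a₀ → τ a₀ < t) : InvI τ (τ a₀) = (a₀ : ℕ) := by
  have himg : (Finset.univ.filter fun t => τ a₀ < t ∧ above τ t (τ a₀))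
      = Finset.image τ (Finset.univ.filter (· < a₀)) := by
    ext t
    simp only [Finset.mem_filter, Finset.mem_image, Finset.mem_univ, true_and]
    constructor
    · rintro ⟨hst, hrank, habove⟩
      obtain ⟨a, ha, hat⟩ := habove a₀ rfl
      exact ⟨a, ha, hat⟩
    · rintro ⟨a, ha, rfl⟩
      have hne : τ a ≠ τ a₀ := fun h => absurd (τ.injective h) (ne_of_lt ha)
      refine ⟨hlt _ ⟨a, rfl⟩ hne, ⟨a, rfl⟩, ?_⟩
      intro b hb
      have hb' : b = a₀ := τ.injective hb
      subst hb'
      exact ⟨a, ha, rfl⟩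
  have hIio : (Finset.univ.filter (· < a₀) : Finset (Fin (m + 1))) = Finset.Iio a₀ := by
    ext a; simp
  rw [InvI, himg, Finset.card_image_of_injective _ τ.injective, hIio, Fin.card_Iio]

lemma InvI_delEmb (τ : Fin (m + 1) ↪ Fin n) (a₀ : Fin (m + 1)) (i : Fin n)
    (hi : τ a₀ < i) : InvI τ i = InvI (delEmb a₀ τ) i := by
  unfold InvI
  congr 1
  ext t
  simp only [Finset.mem_filter, Finset.mem_univ, true_and, and_congr_right_iff]
  intro hit
  have htne : t ≠ τ a₀ := fun h => absurd (hi.trans hit) (h ▸ lt_irrefl _)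
  have hine : i ≠ τ a₀ := ne_of_gt hi
  unfold above
  constructor
  · rintro ⟨hr, hb⟩
    refine ⟨(ranked_delEmb a₀ τ t htne).2 hr, ?_⟩
    intro b' hb'
    obtain ⟨a, ha, hat⟩ := hb (a₀.succAbove b') hb'
    have hane : a ≠ a₀ := by rintro rfl; exact htne hat.symm
    obtain ⟨a', rfl⟩ := Fin.exists_succAbove_eq hane
    exact ⟨a', Fin.succAbove_lt_succAbove_iff.1 ha, hat⟩
  · rintro ⟨hr, hb⟩
    refine ⟨(ranked_delEmb a₀ τ t htne).1 hr, ?_⟩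
    intro b hbeq
    have hbne : b ≠ a₀ := by rintro rfl; exact hine hbeq.symm
    obtain ⟨b', rfl⟩ := Fin.exists_succAbove_eq hbne
    obtain ⟨a', ha', hat⟩ := hb b' hbeq
    exact ⟨a₀.succAbove a', Fin.succAbove_lt_succAbove_iff.2 ha', hat⟩

noncomputable def posOf (τ : Fin (m + 1) ↪ Fin n) (s₁ : Fin n) : Fin (m + 1) :=
  if h : ∃ a, τ a = s₁ then h.choose else 0

lemma posOf_spec {τ : Fin (m + 1) ↪ Fin n} {s₁ : Fin n} (h : ∃ a, τ a = s₁) :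
    τ (posOf τ s₁) = s₁ := by rw [posOf, dif_pos h]; exact h.choose_spec

lemma posOf_eq {τ : Fin (m + 1) ↪ Fin n} {s₁ : Fin n} {a : Fin (m + 1)} (h : τ a = s₁) :
    posOf τ s₁ = a := τ.injective (by rw [posOf_spec ⟨a, h⟩, h])

end Aux


section Main

open Finset

variable {n : ℕ}

lemma rec_step (k : ℕ) (β : ℝ) (w : Fin n → ℝ) (m : ℕ) (S : Finset (Fin n)) (s₁ : Fin n)
    (hs₁ : s₁ ∈ S) (hsk : (s₁ : ℕ) < k) (hmin : ∀ t ∈ S, s₁ ≤ t) :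
    ∑ τ ∈ Finset.univ.filter (fun τ : Fin (m + 1) ↪ Fin n => prof k τ = S),
        ∏ i ∈ S, Real.exp (-β * w i * (InvI τ i : ℝ)) =
    (∑ r ∈ Finset.range (m + 1), Real.exp (-β * w s₁ * r)) *
      ∑ τ' ∈ Finset.univ.filter (fun τ' : Fin m ↪ Fin n => prof k τ' = S.erase s₁),
        ∏ i ∈ S.erase s₁, Real.exp (-β * w i * (InvI τ' i : ℝ)) := by
  have hnot : ∀ (τ' : Fin m ↪ Fin n), prof k τ' = S.erase s₁ → ∀ a, τ' a ≠ s₁ := by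
    intro τ' hp a ha
    have : s₁ ∈ prof k τ' := mem_prof.2 ⟨hsk, ⟨a, ha⟩⟩
    rw [hp] at this
    exact (Finset.mem_erase.1 this).1 rfl
  rw [← Fin.sum_univ_eq_sum_range (fun r => Real.exp (-β * w s₁ * r)) (m + 1),
    Finset.sum_mul_sum, ← Finset.sum_product']
  refine Finset.sum_bij'
    (fun τ _ => (posOf τ s₁, delEmb (posOf τ s₁) τ))
    (fun x hx => insEmb x.1 s₁ x.2 (hnot x.2 (Finset.mem_filter.1 (Finset.mem_product.1 hx).2).2))
    ?_ ?_ ?_ ?_ ?_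
  · -- maps into target
    intro τ hτ
    have hp : prof k τ = S := (Finset.mem_filter.1 hτ).2
    have hrank : ∃ a, τ a = s₁ := (mem_prof.1 (hp ▸ hs₁)).2
    have hpos : τ (posOf τ s₁) = s₁ := posOf_spec hrank
    rw [Finset.mem_product]
    refine ⟨Finset.mem_univ _, Finset.mem_filter.2 ⟨Finset.mem_univ _, ?_⟩⟩
    rw [prof_delEmb, hpos, hp]
  · -- maps back into source
    rintro ⟨a₀, τ'⟩ hx
    have hp : prof k τ' = S.erase s₁ := (Finset.mem_filter.1 (Finset.mem_product.1 hx).2).2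
    refine Finset.mem_filter.2 ⟨Finset.mem_univ _, ?_⟩
    rw [prof_insEmb _ _ _ _ hsk, hp, Finset.insert_erase hs₁]
  · -- left inverse
    intro τ hτ
    have hp : prof k τ = S := (Finset.mem_filter.1 hτ).2
    have hrank : ∃ a, τ a = s₁ := (mem_prof.1 (hp ▸ hs₁)).2
    have hpos : τ (posOf τ s₁) = s₁ := posOf_spec hrank
    apply DFunLike.ext
    intro b
    rcases eq_or_ne b (posOf τ s₁) with h | h
    · rw [h, insEmb_apply_same, hpos]
    · obtain ⟨b', rfl⟩ := Fin.exists_succAbove_eq h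
      rw [insEmb_apply_succAbove, delEmb_apply]
  · -- right inverse
    rintro ⟨a₀, τ'⟩ hx
    have hs := hnot τ' (Finset.mem_filter.1 (Finset.mem_product.1 hx).2).2
    have h1 : posOf (insEmb a₀ s₁ τ' hs) s₁ = a₀ := posOf_eq (insEmb_apply_same a₀ s₁ τ' hs)
    show (posOf (insEmb a₀ s₁ τ' hs) s₁,
      delEmb (posOf (insEmb a₀ s₁ τ' hs) s₁) (insEmb a₀ s₁ τ' hs)) = (a₀, τ')
    rw [h1]
    refine Prod.ext rfl ?_
    apply DFunLike.ext
    intro a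
    rw [delEmb_apply, insEmb_apply_succAbove]
  · -- values agree
    intro τ hτ
    have hp : prof k τ = S := (Finset.mem_filter.1 hτ).2
    have hrank : ∃ a, τ a = s₁ := (mem_prof.1 (hp ▸ hs₁)).2
    have hpos : τ (posOf τ s₁) = s₁ := posOf_spec hrank
    have hlt : ∀ t, ranked τ t → t ≠ s₁ → s₁ < t := by
      intro t ht htne
      by_cases htk : (t : ℕ) < k
      · have : t ∈ S := hp ▸ mem_prof.2 ⟨htk, ht⟩
        exact lt_of_le_of_ne (hmin t this) (Ne.symm htne)
      · exact Fin.lt_def.2 (lt_of_lt_of_le hsk (le_of_not_gt htk))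
    rw [← Finset.mul_prod_erase S _ hs₁]
    congr 1
    · have : InvI τ s₁ = (posOf τ s₁ : ℕ) := by
        conv_lhs => rw [← hpos]
        exact InvI_eq_pos τ (posOf τ s₁) (by rw [hpos]; exact hlt)
      rw [this]
    · refine Finset.prod_congr rfl fun i hi => ?_
      have hiS : i ∈ S := Finset.mem_of_mem_erase hi
      have hine : i ≠ s₁ := (Finset.mem_erase.1 hi).1
      have : InvI τ i = InvI (delEmb (posOf τ s₁) τ) i := by
        apply InvI_delEmb
        rw [hpos]
        exact lt_of_le_of_ne (hmin i hiS) (Ne.symm hine)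
      rw [this]

def natLeEquiv (n k : ℕ) : {x : Fin n // k ≤ (x : ℕ)} ≃ Fin (n - k) where
  toFun x := ⟨(x : Fin n) - k, by have h1 := (x : Fin n).isLt; have h2 := x.2; omega⟩
  invFun r := ⟨⟨(r : ℕ) + k, by have := r.isLt; omega⟩, by simp⟩
  left_inv x := by
    have h2 := x.2
    apply Subtype.ext; apply Fin.ext; simp; omega
  right_inv r := by apply Fin.ext; simp

lemma base_card (k m : ℕ) :
    (Finset.univ.filter (fun τ : Fin m ↪ Fin n => prof k τ = (∅ : Finset (Fin n)))).card
      = (n - k).choose m * m.factorial := by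
  have hiff : ∀ τ : Fin m ↪ Fin n, prof k τ = ∅ ↔ ∀ a, k ≤ ((τ a : Fin n) : ℕ) := by
    intro τ
    constructor
    · intro h a
      by_contra hlt
      have : τ a ∈ prof k τ := mem_prof.2 ⟨lt_of_not_ge hlt, ⟨a, rfl⟩⟩
      rw [h] at this
      exact absurd this (Finset.notMem_empty _)
    · intro h
      ext i
      simp only [mem_prof, Finset.notMem_empty, iff_false]
      rintro ⟨hik, a, rfl⟩
      exact absurd hik (not_lt.2 (h a))
  rw [Finset.filter_congr (fun τ _ => by rw [hiff τ])]
  have e : {τ : Fin m ↪ Fin n // ∀ a, k ≤ ((τ a : Fin n) : ℕ)} ≃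
      (Fin m ↪ {x : Fin n // k ≤ (x : ℕ)}) :=
    { toFun := fun x => ⟨fun a => ⟨x.1 a, x.2 a⟩,
        fun a b hab => x.1.injective (congrArg Subtype.val hab)⟩
      invFun := fun σ => ⟨⟨fun a => (σ a : Fin n),
        fun a b hab => σ.injective (Subtype.ext hab)⟩, fun a => (σ a).2⟩
      left_inv := fun x => by apply Subtype.ext; apply DFunLike.ext; intro a; rfl
      right_inv := fun σ => by apply DFunLike.ext; intro a; apply Subtype.ext; rfl }
  have := Fintype.card_congr (e.trans (Equiv.embeddingCongr (Equiv.refl _) (natLeEquiv n k)))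
  rw [Fintype.card_subtype] at this
  rw [this, Fintype.card_embedding_eq, Fintype.card_fin, Fintype.card_fin,
    Nat.descFactorial_eq_factorial_mul_choose, Nat.mul_comm]

end Main


section Main2

open Finset

variable {n : ℕ}

lemma list_main (k : ℕ) (β : ℝ) (w : Fin n → ℝ) :
    ∀ (L : List (Fin n)), L.Pairwise (· < ·) → (∀ i ∈ L, (i : ℕ) < k) → ∀ m, L.length ≤ m →
    ∑ τ ∈ Finset.univ.filter (fun τ : Fin m ↪ Fin n => prof k τ = L.toFinset),
        ∏ i ∈ L.toFinset, Real.exp (-β * w i * (InvI τ i : ℝ)) =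
    (((n - k).choose (m - L.length) * (m - L.length).factorial : ℕ) : ℝ) *
      ∏ j : Fin L.length, ∑ r ∈ Finset.range (m - (j : ℕ)),
        Real.exp (-β * w (L.get j) * r) := by
  intro L
  induction L with
  | nil =>
    intro _ _ m _
    simp only [List.toFinset_nil, Finset.prod_empty, Finset.sum_const, nsmul_eq_mul, mul_one,
      List.length_nil, Nat.sub_zero]
    erw [base_card k m]
    simp
  | cons s₁ L' ih =>
    intro hsort hall m hlen
    obtain ⟨m', rfl⟩ : ∃ m', m = m' + 1 := ⟨m - 1, by simp at hlen; omega⟩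
    have hslt : ∀ b ∈ L', s₁ < b := (List.pairwise_cons.1 hsort).1
    have hs₁L' : s₁ ∉ L' := fun h => lt_irrefl s₁ (hslt s₁ h)
    have hTF : (s₁ :: L').toFinset = insert s₁ L'.toFinset := by simp
    have herase : (insert s₁ L'.toFinset).erase s₁ = L'.toFinset :=
      Finset.erase_insert (by simpa using hs₁L')
    rw [hTF]
    rw [rec_step k β w m' (insert s₁ L'.toFinset) s₁ (Finset.mem_insert_self _ _)
      (hall s₁ (List.mem_cons_self)) ?hmin]
    case hmin =>
      intro t ht
      rcases Finset.mem_insert.1 ht with rfl | ht'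
      · exact le_refl _
      · exact le_of_lt (hslt t (List.mem_toFinset.1 ht'))
    rw [herase]
    rw [ih (List.pairwise_cons.1 hsort).2 (fun i hi => hall i (List.mem_cons_of_mem _ hi)) m'
      (by simp at hlen ⊢; omega)]
    have hconst : ((n - k).choose (m' + 1 - (s₁ :: L').length)
        * (m' + 1 - (s₁ :: L').length).factorial : ℕ)
        = ((n - k).choose (m' - L'.length) * (m' - L'.length).factorial : ℕ) := by
      simp
    rw [hconst]
    have hprod : (∏ j : Fin (s₁ :: L').length, ∑ r ∈ Finset.range (m' + 1 - (j : ℕ)),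
          Real.exp (-β * w ((s₁ :: L').get j) * r))
        = (∑ r ∈ Finset.range (m' + 1), Real.exp (-β * w s₁ * r)) *
          ∏ j : Fin L'.length, ∑ r ∈ Finset.range (m' - (j : ℕ)),
            Real.exp (-β * w (L'.get j) * r) := by
      show (∏ j : Fin (L'.length + 1), ∑ r ∈ Finset.range (m' + 1 - (j : ℕ)),
          Real.exp (-β * w ((s₁ :: L').get j) * r)) = _
      rw [Fin.prod_univ_succ]
      congr 1
      refine Finset.prod_congr rfl fun j _ => ?_
      have h1 : m' + 1 - ((Fin.succ j : Fin (L'.length + 1)) : ℕ) = m' - (j : ℕ) := by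
        rw [Fin.val_succ]; omega
      rw [h1]
      rfl
    rw [hprod]
    ring

lemma card_centerF (k : ℕ) (hk : k ≤ n) : (centerF n k).card = k := by
  have e : {x : Fin n // (x : ℕ) < k} ≃ Fin k :=
    { toFun := fun x => ⟨((x : Fin n) : ℕ), x.2⟩
      invFun := fun a => ⟨⟨(a : ℕ), lt_of_lt_of_le a.isLt hk⟩, a.isLt⟩
      left_inv := fun x => by apply Subtype.ext; apply Fin.ext; rfl
      right_inv := fun a => by apply Fin.ext; rfl }
  have hcc := Fintype.card_congr e
  rw [Fintype.card_subtype, Fintype.card_fin] at hcc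
  exact hcc

lemma Kdist_decomp (k : ℕ) (hk : k ≤ n) (p w0 : ℝ) (w : Fin n → ℝ) (τ : Fin k ↪ Fin n)
    (S : Finset (Fin n)) (h : profileF τ = S) :
    Kdist p w0 w τ = fS n k p w0 w S + ∑ i ∈ S, w i * (InvI τ i : ℝ) := by
  classical
  set C := centerF n k with hC
  set T := Finset.univ.map τ with hT
  have hrT : ∀ i, ranked τ i ↔ i ∈ T := by
    intro i; simp [hT, ranked]
  have hTC : T ∩ C = S := by
    rw [← h]
    ext i
    simp only [Finset.mem_inter, profileF, Finset.mem_filter, Finset.mem_univ, true_and, hC,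
      centerF]
    rw [← hrT]
    tauto
  have hSC : S ⊆ C := by rw [← hTC]; exact Finset.inter_subset_right
  have hST : S ⊆ T := by rw [← hTC]; exact Finset.inter_subset_left
  have hcardT : T.card = k := by rw [hT, Finset.card_map, Finset.card_univ, Fintype.card_fin]
  have hcardC : C.card = k := card_centerF k hk
  have hcardTC : (T \ C).card = k - S.card := by
    have := Finset.card_inter_add_card_sdiff T C
    rw [hTC, hcardT] at this
    omega
  have hcardCS : (C \ S).card = k - S.card := by
    rw [Finset.card_sdiff_of_subset hSC, hcardC]
  -- values on C \ S
  have hI : ∀ i ∈ C \ S, InvI τ i = (S.filter fun t => i < t).card + (k - S.card) := by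
    intro i hi
    obtain ⟨hiC, hiS⟩ := Finset.mem_sdiff.1 hi
    have hik : (i : ℕ) < k := by simpa [hC, centerF] using hiC
    have hnr : ¬ ranked τ i := by
      intro hr
      exact hiS (hTC ▸ Finset.mem_inter.2 ⟨(hrT i).1 hr, hiC⟩)
    have h1 : (Finset.univ.filter fun t => i < t ∧ above τ t i) = T.filter (fun t => i < t) := by
      ext t
      simp only [Finset.mem_filter, Finset.mem_univ, true_and]
      constructor
      · rintro ⟨hit, hr, _⟩
        exact ⟨(hrT t).1 hr, hit⟩
      · rintro ⟨htT, hit⟩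
        exact ⟨hit, (hrT t).2 htT, fun b hb => absurd ⟨b, hb⟩ hnr⟩
    have h2 : T.filter (fun t => i < t) = S.filter (fun t => i < t) ∪ (T \ C) := by
      ext t
      simp only [Finset.mem_filter, Finset.mem_union, Finset.mem_sdiff]
      constructor
      · rintro ⟨htT, hit⟩
        by_cases htC : t ∈ C
        · exact Or.inl ⟨hTC ▸ Finset.mem_inter.2 ⟨htT, htC⟩, hit⟩
        · exact Or.inr ⟨htT, htC⟩
      · rintro (⟨htS, hit⟩ | ⟨htT, htC⟩)
        · exact ⟨hST htS, hit⟩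
        · refine ⟨htT, ?_⟩
          have : ¬ ((t : ℕ) < k) := by simpa [hC, centerF] using htC
          exact Fin.lt_def.2 (lt_of_lt_of_le hik (le_of_not_gt this))
    have hdisj : Disjoint (S.filter (fun t => i < t)) (T \ C) := by
      refine Finset.disjoint_left.2 fun t htf htTC => ?_
      exact (Finset.mem_sdiff.1 htTC).2 (hSC (Finset.mem_of_mem_filter t htf))
    rw [InvI, h1, h2, Finset.card_union_of_disjoint hdisj, hcardTC]
  have hP : ∀ i ∈ C \ S, Pinv τ i
      = ((C \ S).filter fun t => i < t).card + (n - k - (k - S.card)) := by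
    intro i hi
    obtain ⟨hiC, hiS⟩ := Finset.mem_sdiff.1 hi
    have hik : (i : ℕ) < k := by simpa [hC, centerF] using hiC
    have hnr : ¬ ranked τ i := by
      intro hr
      exact hiS (hTC ▸ Finset.mem_inter.2 ⟨(hrT i).1 hr, hiC⟩)
    set U := Finset.univ \ T with hU
    have hcardU : U.card = n - k := by
      rw [hU, Finset.card_sdiff_of_subset (Finset.subset_univ _), Finset.card_univ, Fintype.card_fin,
        hcardT]
    have hUC : U ∩ C = C \ S := by
      ext t
      simp only [hU, Finset.mem_inter, Finset.mem_sdiff, Finset.mem_univ, true_and]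
      constructor
      · rintro ⟨htT, htC⟩
        exact ⟨htC, fun htS => htT (hST htS)⟩
      · rintro ⟨htC, htS⟩
        exact ⟨fun htT => htS (hTC ▸ Finset.mem_inter.2 ⟨htT, htC⟩), htC⟩
    have hcardUC : (U \ C).card = n - k - (k - S.card) := by
      have := Finset.card_inter_add_card_sdiff U C
      rw [hUC, hcardCS, hcardU] at this
      omega
    have h1 : (Finset.univ.filter fun t => i < t ∧ ¬ ranked τ t ∧ ¬ ranked τ i)
        = U.filter (fun t => i < t) := by
      ext t
      simp only [Finset.mem_filter, Finset.mem_univ, true_and, hU, Finset.mem_sdiff]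
      rw [← hrT]
      tauto
    have h2 : U.filter (fun t => i < t) = (C \ S).filter (fun t => i < t) ∪ (U \ C) := by
      ext t
      simp only [Finset.mem_filter, Finset.mem_union, Finset.mem_sdiff]
      constructor
      · rintro ⟨htU, hit⟩
        by_cases htC : t ∈ C
        · have hmem : t ∈ C \ S := by rw [← hUC]; exact Finset.mem_inter.2 ⟨htU, htC⟩
          exact Or.inl ⟨Finset.mem_sdiff.1 hmem, hit⟩
        · exact Or.inr ⟨htU, htC⟩
      · rintro (⟨⟨htC, htS⟩, hit⟩ | ⟨htU, htC⟩)
        · refine ⟨?_, hit⟩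
          have hmem : t ∈ U ∩ C := by rw [hUC]; exact Finset.mem_sdiff.2 ⟨htC, htS⟩
          exact (Finset.mem_inter.1 hmem).1
        · refine ⟨htU, ?_⟩
          have : ¬ ((t : ℕ) < k) := by simpa [hC, centerF] using htC
          exact Fin.lt_def.2 (lt_of_lt_of_le hik (le_of_not_gt this))
    have hdisj : Disjoint ((C \ S).filter (fun t => i < t)) (U \ C) := by
      refine Finset.disjoint_left.2 fun t htf htUC => ?_
      exact (Finset.mem_sdiff.1 htUC).2 ((Finset.mem_sdiff.1 (Finset.mem_of_mem_filter t htf)).1)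
    rw [Pinv, h1, h2, Finset.card_union_of_disjoint hdisj, hcardUC]
  have hPS : ∀ i ∈ S, Pinv τ i = 0 := by
    intro i hiS
    have hr : ranked τ i := (hrT i).2 (hST hiS)
    rw [Pinv, Finset.card_eq_zero]
    ext t
    simp only [Finset.mem_filter, Finset.mem_univ, true_and, Finset.notMem_empty, iff_false]
    rintro ⟨_, _, hnr⟩
    exact hnr hr
  have hQ : (Qinv τ : ℝ) = ((k - S.card).choose 2 : ℕ) := by rw [Qinv, h]
  have hsplit : ∑ i ∈ C, w i * ((InvI τ i : ℝ) + p * (Pinv τ i : ℝ))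
      = (∑ i ∈ C \ S, w i * ((InvI τ i : ℝ) + p * (Pinv τ i : ℝ)))
        + ∑ i ∈ S, w i * ((InvI τ i : ℝ) + p * (Pinv τ i : ℝ)) := (Finset.sum_sdiff hSC).symm
  have h1 : ∑ i ∈ C \ S, w i * ((InvI τ i : ℝ) + p * (Pinv τ i : ℝ))
      = ∑ j ∈ C \ S, w j * ((((S.filter fun t => j < t).card + (k - S.card) : ℕ) : ℝ)
          + p * ((((C \ S).filter fun t => j < t).card + (n - k - (k - S.card)) : ℕ) : ℝ)) := by
    refine Finset.sum_congr rfl fun i hi => ?_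
    rw [hI i hi, hP i hi]
  have h2 : ∑ i ∈ S, w i * ((InvI τ i : ℝ) + p * (Pinv τ i : ℝ))
      = ∑ i ∈ S, w i * (InvI τ i : ℝ) := by
    refine Finset.sum_congr rfl fun i hi => ?_
    rw [hPS i hi]
    push_cast
    ring
  rw [Kdist, fS, hQ, hsplit, h1, h2, ← hC]
  ring

end Main2


/-- Profile probability formula for the generalized top-`k` Mallows model:
`Σ_{τ : τ∩[k]=S} exp(-β K^{p,w}(τ,τ*)) = exp(-β f(S)) Z(S)`, so the probability of the
profile `S` is proportional to `exp(-β f(S)) Z(S)`. -/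
theorem stmt6 (n k : ℕ) (hk : k ≤ n) (β p w0 : ℝ) (hβ : 0 ≤ β) (hp : 0 < p)
    (hw0 : 0 ≤ w0) (w : Fin n → ℝ) (hw : ∀ i, 0 ≤ w i)
    (S : Finset (Fin n)) (hS : ∀ i ∈ S, (i : ℕ) < k) :
    ∑ τ ∈ (Finset.univ.filter fun τ : Fin k ↪ Fin n => profileF τ = S),
        Real.exp (-β * Kdist p w0 w τ)
      = Real.exp (-β * fS n k p w0 w S) * ZS n k β w S := by
  classical
  have hSC : S ⊆ centerF n k := fun i hi => by
    simp only [centerF, Finset.mem_filter, Finset.mem_univ, true_and]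
    exact hS i hi
  have hcard : S.card ≤ k := by
    calc S.card ≤ (centerF n k).card := Finset.card_le_card hSC
    _ = k := card_centerF k hk
  have hstep : ∀ τ : Fin k ↪ Fin n, profileF τ = S →
      Real.exp (-β * Kdist p w0 w τ)
        = Real.exp (-β * fS n k p w0 w S)
          * ∏ i ∈ S, Real.exp (-β * w i * (InvI τ i : ℝ)) := by
    intro τ hτ
    rw [Kdist_decomp k hk p w0 w τ S hτ, mul_add, Real.exp_add]
    congr 1
    rw [Finset.mul_sum, Real.exp_sum]
    exact Finset.prod_congr rfl fun i _ => congrArg Real.exp (by ring)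
  rw [Finset.sum_congr rfl (fun τ hτ => hstep τ (Finset.mem_filter.1 hτ).2), ← Finset.mul_sum]
  congr 1
  set L := S.sort (· ≤ ·) with hL
  have hLS : L.toFinset = S := Finset.sort_toFinset _ _
  have hlen : L.length = S.card := Finset.length_sort _
  have hmain := list_main k β w L ((Finset.sortedLT_sort S).pairwise)
    (fun i hi => hS i (by rw [← hLS]; exact List.mem_toFinset.2 hi)) k
    (by rw [hlen]; exact hcard)
  rw [hLS] at hmain
  show (∑ τ ∈ Finset.univ.filter (fun τ : Fin k ↪ Fin n => prof k τ = S),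
      ∏ i ∈ S, Real.exp (-β * w i * (InvI τ i : ℝ))) = ZS n k β w S
  rw [hmain, ZS]
  congr 1
  · rw [hlen]
  · refine Fintype.prod_equiv (finCongr (hlen : L.length = S.card)) _ _ fun j => ?_
    have harg : ((S.orderIsoOfFin rfl (finCongr hlen j) : S) : Fin n) = L.get j := by
      rw [Finset.coe_orderIsoOfFin_apply, Finset.orderEmbOfFin_apply]
      simp [List.get_eq_getElem]
      rfl
    rw [harg]
    rfl
end

section
/- For the identity center τ* over [n] and a top-k list τ with S = τ ∩ [k], |S| = ℓ, and any j ∈ [k] \ S: the number of elements t > j that are ranked by τ equals |{t ∈ S : t > j}| + (k - ℓ), and the number of elements t > j such that both t and j are unranked by τ equals |{t ∈ [k] \ S : t > j}| + (n - k - (k - ℓ)). -/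
open Finset

/-- For the identity center, a top-`k` list `τ` with profile `S = τ ∩ [k]`, `|S| = ℓ`,
and any `j ∈ [k] \ S`: the number of elements `t > j` ranked by `τ` equals
`|{t ∈ S : t > j}| + (k - ℓ)`, and the number of elements `t > j` with both `t` and `j`
unranked by `τ` equals `|{t ∈ [k]\S : t > j}| + (n - k - (k - ℓ))`. -/
theorem stmt19 (n k ℓ : ℕ) (hk : k ≤ n) (τ : Fin k ↪ Fin n) (S : Finset (Fin n))
    (hS : profileF τ = S) (hℓ : S.card = ℓ) (j : Fin n) (hjk : (j : ℕ) < k)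
    (hj : ¬ ranked τ j) :
    (Finset.univ.filter fun t : Fin n => j < t ∧ ranked τ t).card
        = (S.filter fun t => j < t).card + (k - ℓ) ∧
    (Finset.univ.filter fun t : Fin n => j < t ∧ ¬ ranked τ t ∧ ¬ ranked τ j).card
        = ((centerF n k \ S).filter fun t => j < t).card + (n - k - (k - ℓ)) := by
  subst hS hℓ
  -- ranked set has cardinality k
  have hRcard : (univ.filter fun t : Fin n => ranked τ t).card = k := by
    have hmap : (univ.filter fun t : Fin n => ranked τ t) = univ.map τ := by
      ext t; rw [Finset.mem_filter, Finset.mem_map]; simp [ranked]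
    rw [hmap, Finset.card_map, Finset.card_univ, Fintype.card_fin]
  -- split ranked set by < k
  have h1 : (profileF τ).card
      + (univ.filter fun t : Fin n => ranked τ t ∧ ¬ (t : ℕ) < k).card = k := by
    have key := Finset.card_filter_add_card_filter_not
      (s := univ.filter fun t : Fin n => ranked τ t) (p := fun t : Fin n => (t : ℕ) < k)
    have e1 : ((univ.filter fun t : Fin n => ranked τ t).filter
        fun t : Fin n => (t : ℕ) < k) = profileF τ := by
      ext t; simp [profileF]; tauto
    have e2 : ((univ.filter fun t : Fin n => ranked τ t).filter
        fun t : Fin n => ¬ (t : ℕ) < k)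
        = univ.filter fun t : Fin n => ranked τ t ∧ ¬ (t : ℕ) < k := by
      ext t; simp
    rw [e1, e2, hRcard] at key
    exact key
  -- elements with value ≥ k number n - k
  have hCk : (univ.filter fun t : Fin n => (t : ℕ) < k).card = k := by
    have hmap : (univ.filter fun t : Fin n => (t : ℕ) < k)
        = univ.map ⟨Fin.castLE hk, Fin.castLE_injective hk⟩ := by
      ext t
      simp only [Finset.mem_filter, Finset.mem_map, Finset.mem_univ, true_and,
        Function.Embedding.coeFn_mk]
      constructor
      · intro h; exact ⟨⟨(t : ℕ), h⟩, by ext; simp⟩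
      · rintro ⟨a, rfl⟩; exact a.isLt
    rw [hmap, Finset.card_map, Finset.card_univ, Fintype.card_fin]
  have hge : (univ.filter fun t : Fin n => ¬ (t : ℕ) < k).card = n - k := by
    have := Finset.card_filter_add_card_filter_not
      (s := (univ : Finset (Fin n))) (p := fun t : Fin n => (t : ℕ) < k)
    rw [Finset.card_univ, Fintype.card_fin, hCk] at this
    omega
  -- split the ≥ k elements by rankedness
  have h2 : (univ.filter fun t : Fin n => ranked τ t ∧ ¬ (t : ℕ) < k).card
      + (univ.filter fun t : Fin n => ¬ ranked τ t ∧ ¬ (t : ℕ) < k).card = n - k := by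
    have key := Finset.card_filter_add_card_filter_not
      (s := univ.filter fun t : Fin n => ¬ (t : ℕ) < k) (p := fun t : Fin n => ranked τ t)
    have e1 : ((univ.filter fun t : Fin n => ¬ (t : ℕ) < k).filter
        fun t : Fin n => ranked τ t)
        = univ.filter fun t : Fin n => ranked τ t ∧ ¬ (t : ℕ) < k := by
      ext t; simp; tauto
    have e2 : ((univ.filter fun t : Fin n => ¬ (t : ℕ) < k).filter
        fun t : Fin n => ¬ ranked τ t)
        = univ.filter fun t : Fin n => ¬ ranked τ t ∧ ¬ (t : ℕ) < k := by
      ext t; simp; tauto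
    rw [e1, e2, hge] at key
    exact key
  constructor
  · have hsplit := Finset.card_filter_add_card_filter_not
      (s := univ.filter fun t : Fin n => j < t ∧ ranked τ t)
      (p := fun t : Fin n => (t : ℕ) < k)
    have e1 : ((univ.filter fun t : Fin n => j < t ∧ ranked τ t).filter
        fun t : Fin n => (t : ℕ) < k) = (profileF τ).filter fun t => j < t := by
      ext t; simp [profileF]; tauto
    have e2 : ((univ.filter fun t : Fin n => j < t ∧ ranked τ t).filter
        fun t : Fin n => ¬ (t : ℕ) < k)
        = univ.filter fun t : Fin n => ranked τ t ∧ ¬ (t : ℕ) < k := by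
      ext t
      simp only [Finset.mem_filter, Finset.mem_univ, true_and]
      constructor
      · rintro ⟨⟨_, h2'⟩, h3⟩; exact ⟨h2', h3⟩
      · rintro ⟨h2', h3⟩; exact ⟨⟨by rw [Fin.lt_def]; omega, h2'⟩, h3⟩
    rw [e1, e2] at hsplit
    omega
  · have hsplit := Finset.card_filter_add_card_filter_not
      (s := univ.filter fun t : Fin n => j < t ∧ ¬ ranked τ t ∧ ¬ ranked τ j)
      (p := fun t : Fin n => (t : ℕ) < k)
    have e1 : ((univ.filter fun t : Fin n => j < t ∧ ¬ ranked τ t ∧ ¬ ranked τ j).filter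
        fun t : Fin n => (t : ℕ) < k)
        = (centerF n k \ profileF τ).filter fun t => j < t := by
      ext t; simp [centerF, profileF]; tauto
    have e2 : ((univ.filter fun t : Fin n => j < t ∧ ¬ ranked τ t ∧ ¬ ranked τ j).filter
        fun t : Fin n => ¬ (t : ℕ) < k)
        = univ.filter fun t : Fin n => ¬ ranked τ t ∧ ¬ (t : ℕ) < k := by
      ext t
      simp only [Finset.mem_filter, Finset.mem_univ, true_and]
      constructor
      · rintro ⟨⟨_, h2', _⟩, h3⟩; exact ⟨h2', h3⟩
      · rintro ⟨h2', h3⟩; exact ⟨⟨by rw [Fin.lt_def]; omega, h2', hj⟩, h3⟩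
    rw [e1, e2] at hsplit
    omega
end
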